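/- Let d = 4k where k ≥ 1 is an integer. For all natural numbers l, m with 0 ≤ l, m < d and (l, m) ≠ (0, 0), set O = X^l Z^m. If both l ∈ {0, 2k} and m ∈ {0, 2k}, then (tr O²)² = d² and |tr O⁴| = d. Otherwise, if both l ∈ {0, k, 2k, 3k} and m ∈ {0, k, 2k, 3k}, then tr O² = 0 and |tr O⁴| = d. In all remaining cases, tr O² = 0 and tr O⁴ = 0. -/

import Mathlib

/-- `ζ = exp(2πi/d)`, a primitive `d`-th root of unity. -/
noncomputable def zeta (d : ℕ) : ℂ := Complex.exp (2 * Real.pi * Complex.I / d)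

/-- The qudit shift matrix `X`: `X j k = 1` if `j = k + 1`, else `0`. -/
def pauliX (d : ℕ) : Matrix (ZMod d) (ZMod d) ℂ :=
  Matrix.of fun j k => if j = k + 1 then 1 else 0

/-- The qudit clock matrix `Z`: diagonal with `Z j j = ζ^j`. -/
noncomputable def pauliZ (d : ℕ) : Matrix (ZMod d) (ZMod d) ℂ :=
  Matrix.of fun j k => if j = k then zeta d ^ j.val else 0

variable (d : ℕ) [NeZero d]

lemma zeta_prim : IsPrimitiveRoot (zeta d) d := by
  simpa [zeta, mul_comm] using Complex.isPrimitiveRoot_exp d (NeZero.ne d)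

lemma zeta_pow_d : zeta d ^ d = 1 := (zeta_prim d).pow_eq_one

lemma zeta_pow_mod (n : ℕ) : zeta d ^ n = zeta d ^ (n % d) := by
  conv_lhs => rw [← Nat.div_add_mod n d]
  rw [pow_add, pow_mul, zeta_pow_d, one_pow, one_mul]

lemma zeta_pow_congr {a b : ℕ} (h : a % d = b % d) : zeta d ^ a = zeta d ^ b := by
  rw [zeta_pow_mod, h, ← zeta_pow_mod]

lemma zeta_pow_eq_one_iff {n : ℕ} : zeta d ^ n = 1 ↔ d ∣ n :=
  (zeta_prim d).pow_eq_one_iff_dvd n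

lemma abs_zeta : ‖zeta d‖ = 1 := by
  simp [zeta, Complex.norm_exp]

lemma pauliX_pow (a : ℕ) :
    pauliX d ^ a = Matrix.of fun j k => if j = k + (a : ZMod d) then 1 else 0 := by
  induction a with
  | zero => ext j k; simp [Matrix.one_apply, eq_comm]
  | succ a ih =>
    rw [pow_succ, ih]
    ext j k
    simp only [Matrix.mul_apply, Matrix.of_apply, pauliX]
    rw [Finset.sum_eq_single (k + 1)]
    · simp only [if_pos rfl, mul_one]
      push_cast
      ring_nf
    · intro b _ hb; simp [hb]
    · simp

lemma pauliZ_eq : pauliZ d = Matrix.diagonal fun j => zeta d ^ j.val := by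
  ext j k
  by_cases h : j = k <;> simp [pauliZ, Matrix.diagonal, h]

lemma pauliZ_pow (b : ℕ) :
    pauliZ d ^ b = Matrix.diagonal fun j => zeta d ^ (b * j.val) := by
  have h : (fun j : ZMod d => zeta d ^ j.val) ^ b = fun j => zeta d ^ (b * j.val) := by
    funext j; rw [Pi.pow_apply, ← pow_mul, mul_comm]
  rw [pauliZ_eq, Matrix.diagonal_pow, h]

lemma XZ_apply (a b : ℕ) (j k : ZMod d) :
    (pauliX d ^ a * pauliZ d ^ b) j k
      = if j = k + (a : ZMod d) then zeta d ^ (b * k.val) else 0 := by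
  rw [pauliX_pow, pauliZ_pow, Matrix.mul_diagonal]
  simp [ite_mul]

lemma zeta_pow_val_add (b : ℕ) (k : ZMod d) (a : ℕ) :
    zeta d ^ (b * (k + (a : ZMod d)).val) = zeta d ^ (a * b) * zeta d ^ (b * k.val) := by
  rw [← pow_add]
  apply zeta_pow_congr
  have h1 : (k + (a : ZMod d)).val ≡ k.val + a [MOD d] := by
    rw [ZMod.val_add, ZMod.val_natCast]
    calc (k.val + a % d) % d ≡ k.val + a % d [MOD d] := Nat.mod_modEq _ d
      _ ≡ k.val + a [MOD d] := Nat.ModEq.add_left _ (Nat.mod_modEq a d)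
  calc b * (k + (a : ZMod d)).val ≡ b * (k.val + a) [MOD d] := h1.mul_left b
    _ = a * b + b * k.val := by ring

lemma ZX_comm (a b : ℕ) :
    pauliZ d ^ b * pauliX d ^ a = zeta d ^ (a * b) • (pauliX d ^ a * pauliZ d ^ b) := by
  ext j k
  rw [Matrix.smul_apply, XZ_apply, pauliX_pow, pauliZ_pow, Matrix.diagonal_mul]
  simp only [Matrix.of_apply]
  by_cases h : j = k + (a : ZMod d)
  · rw [if_pos h, if_pos h, mul_one, h, zeta_pow_val_add, smul_eq_mul]
  · simp [h]

lemma sum_zmod (f : ℕ → ℂ) : ∑ j : ZMod d, f j.val = ∑ i ∈ Finset.range d, f i := by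
  refine Finset.sum_nbij' (fun j => j.val) (fun i => (i : ZMod d)) ?_ ?_ ?_ ?_ ?_ <;>
      intro x hx <;> simp_all [ZMod.val_lt, ZMod.val_natCast]
  · exact Nat.mod_eq_of_lt hx

lemma trace_XZ (a b : ℕ) :
    (pauliX d ^ a * pauliZ d ^ b).trace = if d ∣ a ∧ d ∣ b then (d : ℂ) else 0 := by
  rw [Matrix.trace]
  simp only [Matrix.diag_apply, XZ_apply, left_eq_add]
  by_cases ha : (a : ZMod d) = 0
  · have hda : d ∣ a := (ZMod.natCast_eq_zero_iff a d).mp ha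
    simp only [ha, if_true, if_pos rfl]
    have hsum : ∑ j : ZMod d, zeta d ^ (b * j.val)
        = ∑ i ∈ Finset.range d, (zeta d ^ b) ^ i := by
      rw [← sum_zmod d (fun i => (zeta d ^ b) ^ i)]
      exact Finset.sum_congr rfl fun j _ => by rw [← pow_mul]
    rw [hsum]
    by_cases hb : d ∣ b
    · rw [if_pos ⟨hda, hb⟩, (zeta_pow_eq_one_iff d).mpr hb]
      simp
    · rw [if_neg (fun h => hb h.2)]
      have hx1 : zeta d ^ b ≠ 1 := fun h => hb ((zeta_pow_eq_one_iff d).mp h)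
      have h0 : (∑ i ∈ Finset.range d, (zeta d ^ b) ^ i) * (zeta d ^ b - 1) = 0 := by
        rw [geom_sum_mul, ← pow_mul, mul_comm b d, pow_mul, zeta_pow_d, one_pow, sub_self]
      rcases mul_eq_zero.mp h0 with h | h
      · exact h
      · exact absurd (sub_eq_zero.mp h) hx1
  · rw [if_neg, Finset.sum_eq_zero]
    · intro j _; rw [if_neg ha]
    · -- nothing
      intro h
      exact ha ((ZMod.natCast_eq_zero_iff a d).mpr h.1)

lemma O_sq (a b : ℕ) :
    (pauliX d ^ a * pauliZ d ^ b) ^ 2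
      = zeta d ^ (a * b) • (pauliX d ^ (2 * a) * pauliZ d ^ (2 * b)) := by
  rw [sq, mul_assoc, ← mul_assoc (pauliZ d ^ b), ZX_comm, Matrix.smul_mul, Matrix.mul_smul]
  congr 1
  rw [two_mul, two_mul, pow_add, pow_add]
  simp only [mul_assoc]

lemma O_four (a b : ℕ) :
    (pauliX d ^ a * pauliZ d ^ b) ^ 4
      = zeta d ^ (6 * (a * b)) • (pauliX d ^ (4 * a) * pauliZ d ^ (4 * b)) := by
  have : (4 : ℕ) = 2 * 2 := rfl
  rw [this, pow_mul, O_sq, smul_pow, sq (zeta d ^ (a*b)), O_sq, smul_smul,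
      ← pow_add, ← pow_add]
  have h1 : a * b + a * b + 2 * a * (2 * b) = 6 * (a * b) := by ring
  have h2 : 2 * (2 * a) = 4 * a := by ring
  have h3 : 2 * (2 * b) = 4 * b := by ring
  rw [h1, h2, h3]

lemma trace_O_sq (a b : ℕ) :
    ((pauliX d ^ a * pauliZ d ^ b) ^ 2).trace
      = zeta d ^ (a * b) * (if d ∣ 2 * a ∧ d ∣ 2 * b then (d : ℂ) else 0) := by
  rw [O_sq, Matrix.trace_smul, trace_XZ, smul_eq_mul]

lemma trace_O_four (a b : ℕ) :
    ((pauliX d ^ a * pauliZ d ^ b) ^ 4).trace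
      = zeta d ^ (6 * (a * b)) * (if d ∣ 4 * a ∧ d ∣ 4 * b then (d : ℂ) else 0) := by
  rw [O_four, Matrix.trace_smul, trace_XZ, smul_eq_mul]

lemma dvd_two_iff {d k : ℕ} (hd : d = 4 * k) (hk : 1 ≤ k) {x : ℕ} (hx : x < d) :
    d ∣ 2 * x ↔ (x = 0 ∨ x = 2 * k) := by
  constructor
  · rintro ⟨c, hc⟩
    have hc2 : c < 2 := by nlinarith
    interval_cases c <;> omega
  · rintro (rfl | rfl)
    · simp
    · exact ⟨1, by omega⟩

lemma dvd_four_iff {d k : ℕ} (hd : d = 4 * k) (hk : 1 ≤ k) {x : ℕ} (hx : x < d) :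
    d ∣ 4 * x ↔ (x = 0 ∨ x = k ∨ x = 2 * k ∨ x = 3 * k) := by
  constructor
  · rintro ⟨c, hc⟩
    have hc4 : c < 4 := by nlinarith
    interval_cases c <;> omega
  · rintro (rfl | rfl | rfl | rfl)
    · simp
    · exact ⟨1, by omega⟩
    · exact ⟨2, by omega⟩
    · exact ⟨3, by omega⟩

/-- Let `d = 4k` with `k ≥ 1`. For `0 ≤ l, m < d` with
`(l, m) ≠ (0, 0)` and `O = X^l Z^m`: if both `l ∈ {0, 2k}` and `m ∈ {0, 2k}` then
`(tr O²)² = d²` and `|tr O⁴| = d`; otherwise if both `l ∈ {0, k, 2k, 3k}` and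
`m ∈ {0, k, 2k, 3k}` then `tr O² = 0` and `|tr O⁴| = d`; in all remaining cases
`tr O² = 0` and `tr O⁴ = 0`. -/
theorem trace_sq_fourth_of_four_mul (d k : ℕ) [NeZero d] (hd : d = 4 * k)
    (hk : 1 ≤ k) (l m : ℕ) (hl : l < d) (hm : m < d) (hne : (l, m) ≠ (0, 0)) :
    (((l = 0 ∨ l = 2 * k) ∧ (m = 0 ∨ m = 2 * k)) →
        (((pauliX d ^ l * pauliZ d ^ m) ^ 2).trace ^ 2 = (d : ℂ) ^ 2 ∧
         ‖((pauliX d ^ l * pauliZ d ^ m) ^ 4).trace‖ = d)) ∧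
    ((¬((l = 0 ∨ l = 2 * k) ∧ (m = 0 ∨ m = 2 * k)) ∧
      (l = 0 ∨ l = k ∨ l = 2 * k ∨ l = 3 * k) ∧
      (m = 0 ∨ m = k ∨ m = 2 * k ∨ m = 3 * k)) →
        (((pauliX d ^ l * pauliZ d ^ m) ^ 2).trace = 0 ∧
         ‖((pauliX d ^ l * pauliZ d ^ m) ^ 4).trace‖ = d)) ∧
    (¬((l = 0 ∨ l = k ∨ l = 2 * k ∨ l = 3 * k) ∧
       (m = 0 ∨ m = k ∨ m = 2 * k ∨ m = 3 * k)) →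
        (((pauliX d ^ l * pauliZ d ^ m) ^ 2).trace = 0 ∧
         ((pauliX d ^ l * pauliZ d ^ m) ^ 4).trace = 0)) := by
  have abs4 : ∀ a b : ℕ, d ∣ 4 * a → d ∣ 4 * b →
      ‖((pauliX d ^ a * pauliZ d ^ b) ^ 4).trace‖ = d := by
    intro a b ha hb
    rw [trace_O_four, if_pos ⟨ha, hb⟩, norm_mul, norm_pow, abs_zeta, one_pow, one_mul,
      Complex.norm_natCast]
  refine ⟨?_, ?_, ?_⟩
  · rintro ⟨hl1, hm1⟩
    have h2l : d ∣ 2 * l := (dvd_two_iff hd hk hl).mpr hl1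
    have h2m : d ∣ 2 * m := (dvd_two_iff hd hk hm).mpr hm1
    have hlm : d ∣ l * m := by
      rcases hl1 with rfl | rfl
      · simp
      · rcases hm1 with rfl | rfl
        · simp
        · exact ⟨k, by rw [hd]; ring⟩
    constructor
    · rw [trace_O_sq, if_pos ⟨h2l, h2m⟩, (zeta_pow_eq_one_iff d).mpr hlm, one_mul]
    · refine abs4 l m ?_ ?_ <;> rw [dvd_four_iff hd hk (by assumption)] <;> tauto
  · rintro ⟨hnot, hl2, hm2⟩
    constructor
    · rw [trace_O_sq, if_neg, mul_zero]
      rintro ⟨h2l, h2m⟩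
      exact hnot ⟨(dvd_two_iff hd hk hl).mp h2l, (dvd_two_iff hd hk hm).mp h2m⟩
    · exact abs4 l m ((dvd_four_iff hd hk hl).mpr hl2) ((dvd_four_iff hd hk hm).mpr hm2)
  · intro hnot
    constructor
    · rw [trace_O_sq, if_neg, mul_zero]
      rintro ⟨h2l, h2m⟩
      have := (dvd_two_iff hd hk hl).mp h2l
      have := (dvd_two_iff hd hk hm).mp h2m
      exact hnot ⟨by tauto, by tauto⟩
    · rw [trace_O_four, if_neg, mul_zero]
      rintro ⟨h4l, h4m⟩
      exact hnot ⟨(dvd_four_iff hd hk hl).mp h4l, (dvd_four_iff hd hk hm).mp h4m⟩
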